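/- Let (X, ω) be a strongly symplectic Hilbert space with compatible complex structure J. Let U ⊆ X be a closed coisotropic subspace and let L ⊆ X be a Lagrangian subspace such that L + Ann(U) is closed. Then U ∩ JU is a strongly symplectic Hilbert space, and the image of L ∩ U under the orthogonal projection onto U ∩ JU is a Lagrangian subspace of U ∩ JU. -/

import Mathlib

open RealInnerProductSpace

section Aux

variable {X : Type*} [NormedAddCommGroup X] [InnerProductSpace ℝ X]
  (J : X →L[ℝ] X)

theorem SR.comap_comap (hJ2 : ∀ x, J (J x) = -x) (S : Submodule ℝ X) :
    (S.comap (J : X →ₗ[ℝ] X)).comap (J : X →ₗ[ℝ] X) = S := by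
  ext x
  simp only [Submodule.mem_comap, ContinuousLinearMap.coe_coe, hJ2 x, S.neg_mem_iff]

theorem SR.surj (hJ2 : ∀ x, J (J x) = -x) : Function.Surjective J :=
  fun x => ⟨-(J x), by rw [map_neg, hJ2, neg_neg]⟩

theorem SR.orth_comap (hJ2 : ∀ x, J (J x) = -x) (hJiso : ∀ x y, ⟪J x, J y⟫ = ⟪x, y⟫)
    (S : Submodule ℝ X) : (S.comap (J : X →ₗ[ℝ] X))ᗮ = Sᗮ.comap (J : X →ₗ[ℝ] X) := by
  ext x
  simp only [Submodule.mem_orthogonal, Submodule.mem_comap, ContinuousLinearMap.coe_coe]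
  constructor
  · intro h s hs
    obtain ⟨y, rfl⟩ := SR.surj J hJ2 s
    rw [hJiso]
    exact h y hs
  · intro h u hu
    rw [← hJiso u x]
    exact h (J u) hu

theorem SR.map_eq_comap (hJ2 : ∀ x, J (J x) = -x) (S : Submodule ℝ X) :
    S.map (J : X →ₗ[ℝ] X) = S.comap (J : X →ₗ[ℝ] X) := by
  ext x
  simp only [Submodule.mem_map, Submodule.mem_comap, ContinuousLinearMap.coe_coe]
  constructor
  · rintro ⟨s, hs, rfl⟩
    rw [hJ2]
    exact S.neg_mem hs
  · intro h
    exact ⟨-(J x), S.neg_mem h, by rw [map_neg, hJ2, neg_neg]⟩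

end Aux

theorem symplectic_reduction
    {X : Type*} [NormedAddCommGroup X] [InnerProductSpace ℝ X] [CompleteSpace X]
    -- the compatible complex structure of the strongly symplectic Hilbert space
    (J : X →L[ℝ] X)
    (hJ2 : ∀ x, J (J x) = -x)
    (hJiso : ∀ x y, ⟪J x, J y⟫ = ⟪x, y⟫)
    (hJskew : ∀ x y, ⟪J x, y⟫ = -⟪x, J y⟫)
    -- `U` is a closed coisotropic subspace: `Ann U ⊆ U`
    (U : Submodule ℝ X) (hUc : IsClosed (U : Set X))
    (hcoiso : Uᗮ.comap (J : X →ₗ[ℝ] X) ≤ U)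
    -- `L` is a Lagrangian subspace: `L = Ann L`
    (L : Submodule ℝ X) (hLag : L = Lᗮ.comap (J : X →ₗ[ℝ] X))
    -- `L + Ann U` is closed
    (hclosed : IsClosed ((L ⊔ Uᗮ.comap (J : X →ₗ[ℝ] X) : Submodule ℝ X) : Set X)) :
    -- `W := U ∩ JU` is a strongly symplectic Hilbert space:
    -- it is `J`-invariant and `ω` is nondegenerate on it,
    (∀ x ∈ U ⊓ U.map (J : X →ₗ[ℝ] X), J x ∈ U ⊓ U.map (J : X →ₗ[ℝ] X)) ∧
    (∀ x ∈ U ⊓ U.map (J : X →ₗ[ℝ] X), (∀ y ∈ U ⊓ U.map (J : X →ₗ[ℝ] X), ⟪J x, y⟫ = 0) → x = 0) ∧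
    -- and the image of `L ∩ U` under the orthogonal projection `P` onto `W`
    -- is a Lagrangian subspace of `W`
    ∀ P : X →L[ℝ] X, IsIdempotentElem P →
      LinearMap.range (P : X →ₗ[ℝ] X) = U ⊓ U.map (J : X →ₗ[ℝ] X) → LinearMap.ker (P : X →ₗ[ℝ] X) = (U ⊓ U.map (J : X →ₗ[ℝ] X))ᗮ →
      ((L ⊓ U).map (P : X →ₗ[ℝ] X) ≤ U ⊓ U.map (J : X →ₗ[ℝ] X) ∧
        ∀ w ∈ U ⊓ U.map (J : X →ₗ[ℝ] X),
          (w ∈ (L ⊓ U).map (P : X →ₗ[ℝ] X) ↔ ∀ s ∈ (L ⊓ U).map (P : X →ₗ[ℝ] X), ⟪J w, s⟫ = 0)) := by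
  rw [SR.map_eq_comap J hJ2 U]
  set AnnU : Submodule ℝ X := Uᗮ.comap (J : X →ₗ[ℝ] X) with hAnnU
  set W : Submodule ℝ X := U ⊓ U.comap (J : X →ₗ[ℝ] X) with hWdef
  -- basic membership facts
  have hmemW : ∀ x, x ∈ W ↔ x ∈ U ∧ J x ∈ U := by
    intro x; rw [hWdef]; exact Submodule.mem_inf
  -- J-invariance of W
  have part1 : ∀ x ∈ W, J x ∈ W := by
    intro x hx
    rw [hmemW] at hx ⊢
    refine ⟨hx.2, ?_⟩
    rw [hJ2]
    exact U.neg_mem hx.1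
  -- helper: ω(p, q) = 0 when J p ∈ Uᗮ and q ∈ U
  have hann : ∀ p q : X, J p ∈ Uᗮ → q ∈ U → ⟪J p, q⟫ = 0 := by
    intro p q hp hq
    rw [real_inner_comm]
    exact (Submodule.mem_orthogonal U (J p)).mp hp q hq
  -- completeness instances
  haveI : CompleteSpace U := hUc.completeSpace_coe
  have hUoo : Uᗮᗮ = U := Submodule.orthogonal_orthogonal U
  have hAnnUc : IsClosed (AnnU : Set X) := by
    have h : (AnnU : Set X) = J ⁻¹' (Uᗮ : Set X) := rfl
    rw [h]
    exact U.isClosed_orthogonal.preimage J.continuous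
  haveI : CompleteSpace AnnU := hAnnUc.completeSpace_coe
  haveI : CompleteSpace (L ⊔ AnnU : Submodule ℝ X) := hclosed.completeSpace_coe
  -- orthogonal complement of AnnU
  have hAnnUorth : AnnUᗮ = U.comap (J : X →ₗ[ℝ] X) := by
    rw [hAnnU, SR.orth_comap J hJ2 hJiso, hUoo]
  -- the key identity: Ann (L ⊓ U) = L ⊔ Ann U
  have h1 : (L ⊔ AnnU)ᗮ.comap (J : X →ₗ[ℝ] X) = L ⊓ U := by
    rw [← Submodule.inf_orthogonal, Submodule.comap_inf, hAnnUorth,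
      SR.comap_comap J hJ2 U, ← hLag]
  have hKey : (L ⊓ U)ᗮ.comap (J : X →ₗ[ℝ] X) = L ⊔ AnnU := by
    rw [← h1, SR.orth_comap J hJ2 hJiso, SR.comap_comap J hJ2]
    exact Submodule.orthogonal_orthogonal _
  -- lemma D : U ⊓ Wᗮ ≤ AnnU
  have lemD : ∀ x, x ∈ U → x ∈ Wᗮ → x ∈ AnnU := by
    intro x hxU hxW
    obtain ⟨a, ha, b, hb, hab⟩ := AnnU.exists_add_mem_mem_orthogonal x
    have hbU : b ∈ U := by
      have h : b = x - a := by rw [hab]; abel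
      rw [h]
      exact U.sub_mem hxU (hcoiso ha)
    have hbW : b ∈ W := by
      rw [hmemW]
      refine ⟨hbU, ?_⟩
      rw [hAnnUorth] at hb
      exact hb
    have hxb : ⟪x, b⟫ = 0 := by
      rw [real_inner_comm]
      exact (Submodule.mem_orthogonal W x).mp hxW b hbW
    have hab0 : ⟪a, b⟫ = 0 := (Submodule.mem_orthogonal AnnU b).mp hb a ha
    have hb0 : b = 0 := by
      have hbb : ⟪b, b⟫ = 0 := by
        rw [hab, inner_add_left, hab0, zero_add] at hxb
        exact hxb
      exact inner_self_eq_zero.mp hbb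
    rw [hab, hb0, add_zero]
    exact ha
  -- lemma E : AnnU ≤ Wᗮ
  have lemE : ∀ a ∈ AnnU, a ∈ Wᗮ := by
    intro a ha
    rw [Submodule.mem_orthogonal]
    intro u hu
    rw [hmemW] at hu
    calc ⟪u, a⟫ = ⟪J u, J a⟫ := (hJiso u a).symm
      _ = ⟪J a, J u⟫ := real_inner_comm _ _
      _ = 0 := hann a (J u) ha hu.2
  -- nondegeneracy
  have part2 : ∀ x ∈ W, (∀ y ∈ W, ⟪J x, y⟫ = 0) → x = 0 := by
    intro x hx h
    have h2 : ⟪J x, J x⟫ = 0 := h (J x) (part1 x hx)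
    have hx0 : J x = 0 := inner_self_eq_zero.mp h2
    have h3 := hJ2 x
    rw [hx0, map_zero] at h3
    exact neg_eq_zero.mp h3.symm
  refine ⟨part1, part2, ?_⟩
  intro P hPidem hPrange hPker
  have hrangeW : ∀ x : X, P x ∈ W := by
    intro x
    rw [← hPrange]
    exact ⟨x, rfl⟩
  have hPfix : ∀ w ∈ W, P w = w := by
    intro w hw
    rw [← hPrange] at hw
    obtain ⟨z, rfl⟩ := hw
    have h := DFunLike.congr_fun hPidem z
    rwa [ContinuousLinearMap.mul_apply] at h
  have hPannzero : ∀ a ∈ AnnU, P a = 0 := by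
    intro a ha
    have h : a ∈ LinearMap.ker (P : X →ₗ[ℝ] X) := by
      rw [hPker]
      exact lemE a ha
    exact LinearMap.mem_ker.mp h
  have hdiff : ∀ u ∈ U, u - P u ∈ AnnU := by
    intro u hu
    apply lemD
    · exact U.sub_mem hu ((hmemW _).mp (hrangeW u)).1
    · rw [← hPker]
      have h := DFunLike.congr_fun hPidem u
      rw [ContinuousLinearMap.mul_apply] at h
      exact LinearMap.mem_ker.mpr (by rw [ContinuousLinearMap.coe_coe, map_sub, h, sub_self])
  -- isotropy of the image
  have hiso : ∀ s ∈ (L ⊓ U).map (P : X →ₗ[ℝ] X), ∀ t ∈ (L ⊓ U).map (P : X →ₗ[ℝ] X), ⟪J s, t⟫ = 0 := by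
    rintro _ ⟨l, hl, rfl⟩ _ ⟨m, hm, rfl⟩
    obtain ⟨hlL, hlU⟩ := hl
    obtain ⟨hmL, hmU⟩ := hm
    have ha : l - P l ∈ AnnU := hdiff l hlU
    have hb : m - P m ∈ AnnU := hdiff m hmU
    have e1 : ⟪J l, m⟫ = 0 := by
      have hJl : J l ∈ Lᗮ := by rw [hLag] at hlL; exact hlL
      rw [real_inner_comm]
      exact (Submodule.mem_orthogonal L (J l)).mp hJl m hmL
    have e2 : ⟪J l, m - P m⟫ = 0 := by
      rw [hJskew]
      have h : ⟪l, J (m - P m)⟫ = 0 :=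
        (Submodule.mem_orthogonal U (J (m - P m))).mp hb l hlU
      rw [h, neg_zero]
    have e3 : ⟪J (l - P l), m⟫ = 0 := hann _ _ ha hmU
    have e4 : ⟪J (l - P l), m - P m⟫ = 0 := hann _ _ ha (hcoiso hb)
    have expand : ⟪J (P l), P m⟫ =
        ⟪J l, m⟫ - ⟪J l, m - P m⟫ - ⟪J (l - P l), m⟫ + ⟪J (l - P l), m - P m⟫ := by
      simp only [map_sub, inner_sub_left, inner_sub_right]
      ring
    simp only [ContinuousLinearMap.coe_coe]
    rw [expand, e1, e2, e3, e4]
    ring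
  refine ⟨?_, ?_⟩
  · rintro _ ⟨l, _, rfl⟩
    exact hrangeW l
  · intro w hwW
    constructor
    · intro hw s hs
      exact hiso w hw s hs
    · intro h
      have hwU : w ∈ U := ((hmemW w).mp hwW).1
      have hwAnn : w ∈ (L ⊓ U)ᗮ.comap (J : X →ₗ[ℝ] X) := by
        refine Submodule.mem_comap.mpr ?_
        rw [Submodule.mem_orthogonal]
        intro l hl
        obtain ⟨hlL, hlU⟩ := hl
        have ha : l - P l ∈ AnnU := hdiff l hlU
        have h1 : ⟪J w, P l⟫ = 0 := h (P l) ⟨l, ⟨hlL, hlU⟩, rfl⟩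
        have h2 : ⟪J w, l - P l⟫ = 0 := by
          rw [← hJiso (J w) (l - P l), hJ2, inner_neg_left]
          have h3 : ⟪w, J (l - P l)⟫ = 0 :=
            (Submodule.mem_orthogonal U (J (l - P l))).mp ha w hwU
          rw [h3, neg_zero]
        have h4 : ⟪J w, l⟫ = ⟪J w, P l⟫ + ⟪J w, l - P l⟫ := by
          rw [← inner_add_right]
          congr 1
          abel
        rw [ContinuousLinearMap.coe_coe, real_inner_comm, h4, h1, h2, add_zero]
      rw [hKey] at hwAnn
      obtain ⟨l, hlL, a, ha, hla⟩ := Submodule.mem_sup.mp hwAnn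
      have hlw : l = w - a := by rw [← hla]; abel
      have hlU : l ∈ U := by
        rw [hlw]
        exact U.sub_mem hwU (hcoiso ha)
      refine ⟨l, ⟨hlL, hlU⟩, ?_⟩
      rw [ContinuousLinearMap.coe_coe, hlw, map_sub, hPfix w hwW, hPannzero a ha, sub_zero]
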